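/- Let X ∈ {O, SO, R, E} and n > 0. If Step^X_n({End(w)}) ≠ Step^X_{n−1}({End(w)}), then there are pairwise distinct terms t₀, …, t_{n−1}, all different from w, such that adom(Step^X_n({End(w)})) = {t₀, …, t_{n−1}, w}, and the S₀-atoms of Step^X_n({End(w)}) are exactly {S₀(t_i, t_{i+1}) : 0 ≤ i < n}, where t_n denotes w. -/

import Mathlib

set_option maxHeartbeats 1000000
set_option synthInstance.maxHeartbeats 1000000
set_option synthInstance.maxSize 512

attribute [local instance] Classical.propDecidable

noncomputable section

/-! ### Terms and atoms -/

/-- Variables: ordinary variables `Sum.inl n`, or fresh variables `Sum.inr (c, k)`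
introduced by the trigger with code `c` for the head variable with code `k`. -/
abbrev Var : Type := ℕ ⊕ (ℕ × ℕ)

/-- Terms: constants `Sum.inl c` or variables `Sum.inr v`. -/
abbrev FTerm : Type := ℕ ⊕ Var

def ct (n : ℕ) : FTerm := Sum.inl n
def vt (n : ℕ) : FTerm := Sum.inr (Sum.inl n)

/-- An atom: a predicate name together with its list of arguments. -/
abbrev Atom : Type := ℕ × List FTerm

/-- Active domain: all terms occurring in an atom set. -/
def adom (J : Set Atom) : Set FTerm := {t | ∃ a ∈ J, t ∈ a.2}

def atomVarsF (a : Atom) : Finset Var := (a.2.filterMap Sum.getRight?).toFinset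

def varsF (A : Finset Atom) : Finset Var := A.biUnion atomVarsF

def setVars (J : Set Atom) : Set Var := {v | ∃ a ∈ J, Sum.inr v ∈ a.2}

/-! ### Substitutions and homomorphisms -/

abbrev Subst := Var → FTerm

def applyT (σ : Subst) : FTerm → FTerm
  | Sum.inl c => Sum.inl c
  | Sum.inr v => σ v

def applyA (σ : Subst) (a : Atom) : Atom := (a.1, a.2.map (applyT σ))

def IsHomOn (σ : Subst) (A B : Set Atom) : Prop := ∀ a ∈ A, applyA σ a ∈ B

def HomBetween (A B : Set Atom) : Prop := ∃ σ : Subst, IsHomOn σ A B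

def IsRetraction (σ : Subst) (A B : Set Atom) : Prop :=
  IsHomOn σ A B ∧ ∀ v ∈ setVars A ∩ setVars B, σ v = Sum.inr v

/-- Isomorphism of atom sets: a pair of mutually inverse homomorphisms. -/
def Isomorphic (A B : Set Atom) : Prop :=
  ∃ σ τ : Subst, IsHomOn σ A B ∧ IsHomOn τ B A ∧
    (∀ a ∈ A, applyA τ (applyA σ a) = a) ∧ (∀ b ∈ B, applyA σ (applyA τ b) = b)

/-! ### Rules -/

/-- A rule is a pair (body, head). Its existential variables are the head variables
not occurring in the body; its frontier the variables shared by body and head.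
A rule is Datalog when every head variable occurs in the body. -/
abbrev Rule : Type := Finset Atom × Finset Atom

def frontierOf (R : Rule) : Finset Var := varsF R.1 ∩ varsF R.2

def DatRules (Rset : Finset Rule) : Finset Rule := Rset.filter fun R => varsF R.2 ⊆ varsF R.1
def NDatRules (Rset : Finset Rule) : Finset Rule := Rset.filter fun R => ¬ varsF R.2 ⊆ varsF R.1

/-- Satisfaction of a rule in an atom set. -/
def SatisfiesRule (J : Set Atom) (R : Rule) : Prop :=
  ∀ σ : Subst, IsHomOn σ (R.1 : Set Atom) J →
    ∃ σ' : Subst, (∀ v ∈ varsF R.1, σ' v = σ v) ∧ IsHomOn σ' (R.2 : Set Atom) J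

def IsModel (Rset : Finset Rule) (I J : Set Atom) : Prop :=
  (∀ R ∈ Rset, SatisfiesRule J R) ∧ HomBetween I J

/-- BCQ entailment: every model of the KB satisfies the query. -/
def Entails (Rset : Finset Rule) (I q : Set Atom) : Prop :=
  ∀ J : Set Atom, IsModel Rset I J → HomBetween q J

def IsUniversalModel (Rset : Finset Rule) (I U : Set Atom) : Prop :=
  IsModel Rset I U ∧ ∀ J : Set Atom, IsModel Rset I J → HomBetween U J

/-! ### Triggers -/

structure Trigger where
  rule : Rule
  sub : Subst

/-- Injective code of a trigger (a trigger is determined by its rule and the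
restriction of its substitution to the body variables). -/
def Trigger.code (t : Trigger) : ℕ :=
  Encodable.encode (t.rule, (varsF t.rule.1).image fun v => (v, t.sub v))

/-- The canonical extension of the trigger substitution, mapping each existential
variable `z` to the fresh variable unique for `z` and the trigger. -/
def Trigger.extSub (t : Trigger) : Subst := fun v =>
  if v ∈ varsF t.rule.1 then t.sub v
  else Sum.inr (Sum.inr (t.code, Encodable.encode v))

def Trigger.out (t : Trigger) : Finset Atom := t.rule.2.image (applyA t.extSub)

def Trigger.isOn (t : Trigger) (J : Set Atom) : Prop := IsHomOn t.sub (t.rule.1 : Set Atom) J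

/-! ### Chase variants, derivations, chase termination classes -/

inductive ChaseVariant : Type
  | O | SO | R | E
deriving DecidableEq

def Applicable : ChaseVariant → Trigger → Set Atom → Prop
  | .O, t, J => ¬ ((t.out : Set Atom) ⊆ J)
  | .SO, t, J => ∀ t' : Trigger, t'.rule = t.rule → t'.isOn J →
      (∀ v ∈ frontierOf t.rule, t'.sub v = t.sub v) → ¬ ((t'.out : Set Atom) ⊆ J)
  | .R, t, J => ¬ ∃ σ : Subst, IsRetraction σ (J ∪ (t.out : Set Atom)) J
  | .E, t, J => ¬ ∃ σ : Subst, IsHomOn σ (J ∪ (t.out : Set Atom)) J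

def instSeq (I : Set Atom) (steps : ℕ → Option Trigger) : ℕ → Set Atom
  | 0 => I
  | n + 1 => instSeq I steps n ∪
      (match steps n with
        | none => (∅ : Set Atom)
        | some t => (t.out : Set Atom))

/-- A (possibly infinite) derivation from the knowledge base `⟨Rset, I⟩`. -/
structure Deriv (Rset : Finset Rule) (I : Set Atom) where
  steps : ℕ → Option Trigger
  prefix_closed : ∀ n, steps n = none → steps (n + 1) = none
  valid : ∀ n t, steps n = some t →
    t.rule ∈ Rset ∧ t.isOn (instSeq I steps n) ∧ ¬ ((t.out : Set Atom) ⊆ instSeq I steps n)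

def Deriv.inst {Rset : Finset Rule} {I : Set Atom} (D : Deriv Rset I) (n : ℕ) :
    Set Atom := instSeq I D.steps n

def Deriv.res {Rset : Finset Rule} {I : Set Atom} (D : Deriv Rset I) : Set Atom :=
  ⋃ n, D.inst n

def Deriv.Finite {Rset : Finset Rule} {I : Set Atom} (D : Deriv Rset I) : Prop :=
  ∃ n, D.steps n = none

def Deriv.IsX {Rset : Finset Rule} {I : Set Atom} (X : ChaseVariant)
    (D : Deriv Rset I) : Prop :=
  ∀ n t, D.steps n = some t → Applicable X t (D.inst n)

def Deriv.Fair {Rset : Finset Rule} {I : Set Atom} (X : ChaseVariant)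
    (D : Deriv Rset I) : Prop :=
  ∀ i, ∀ t : Trigger, t.rule ∈ Rset → t.isOn (D.inst i) → Applicable X t (D.inst i) →
    ∃ j, i < j ∧ ¬ Applicable X t (D.inst j)

/-- All-instance, all-derivation chase termination. -/
def CTall (X : ChaseVariant) (Rset : Finset Rule) : Prop :=
  ∀ I : Finset Atom, ∀ D : Deriv Rset (I : Set Atom), D.IsX X → D.Fair X → D.Finite

/-- All-instance, some-derivation chase termination. -/
def CTex (X : ChaseVariant) (Rset : Finset Rule) : Prop :=
  ∀ I : Finset Atom, ∃ D : Deriv Rset (I : Set Atom), D.IsX X ∧ D.Fair X ∧ D.Finite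

inductive CTQuant : Type
  | all | ex

def CT (X : ChaseVariant) : CTQuant → Finset Rule → Prop
  | .all => CTall X
  | .ex => CTex X

/-- The result of some fair `X`-derivation from `⟨Rset, J⟩`. -/
def ChX (X : ChaseVariant) (Rset : Finset Rule) (J : Set Atom) : Set Atom :=
  if h : ∃ D : Deriv Rset J, D.IsX X ∧ D.Fair X then h.choose.res else J

/-! ### Gaifman graph, treewidth, bts -/

def gaifmanAdj (J : Set Atom) (u v : FTerm) : Prop :=
  u ≠ v ∧ ∃ a ∈ J, u ∈ a.2 ∧ v ∈ a.2

/-- The (Gaifman graph of the) atom set `J` has treewidth at most `k`: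
there is a tree decomposition all of whose bags have size at most `k + 1`. -/
def TreewidthAtMost (J : Set Atom) (k : ℕ) : Prop :=
  ∃ (ι : Type) (T : SimpleGraph ι) (bag : ι → Finset FTerm),
    T.Connected ∧ T.IsAcyclic ∧
    (∀ v ∈ adom J, ∃ i, v ∈ bag i) ∧
    (∀ u v : FTerm, gaifmanAdj J u v → ∃ i, u ∈ bag i ∧ v ∈ bag i) ∧
    (∀ v : FTerm, (SimpleGraph.induce {i | v ∈ bag i} T).Preconnected) ∧
    (∀ i, (bag i).card ≤ k + 1)

/-- Bounded-treewidth sets: for every instance, some universal model of bounded treewidth. -/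
def IsBts (Rset : Finset Rule) : Prop :=
  ∀ I : Finset Atom, ∃ (k : ℕ) (U : Set Atom),
    IsUniversalModel Rset (I : Set Atom) U ∧ TreewidthAtMost U k

/-! ### Three-counter machines -/

/-- A three-counter machine: states `0, …, m − 1` (state `0` is initial, standing for `q₁`),
and a partial transition function given by a finite table. -/
structure TCM where
  m : ℕ
  hm : 0 < m
  δ : List ((ℕ × Bool × Bool) × (ℕ × Int × Int))
  keys_nodup : (δ.map Prod.fst).Nodup
  wf : ∀ e ∈ δ, e.1.1 < m ∧ e.2.1 < m ∧ e.2.2.1.natAbs ≤ 1 ∧ e.2.2.2.natAbs ≤ 1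

/-- A configuration: state, two counters, and the time counter. -/
abbrev Config : Type := ℕ × ℕ × ℕ × ℕ

def TCM.step (M : TCM) (q : ℕ) (b1 b2 : Bool) : Option (ℕ × Int × Int) :=
  (M.δ.find? fun e => decide (e.1 = (q, b1, b2))).map Prod.snd

def TCM.next (M : TCM) (C : Config) : Option Config :=
  match M.step C.1 (decide (C.2.1 ≠ 0)) (decide (C.2.2.1 ≠ 0)) with
  | none => none
  | some (q', d1, d2) =>
      some (q', ((C.2.1 : ℤ) + d1).toNat, ((C.2.2.1 : ℤ) + d2).toNat, C.2.2.2 + 1)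

def TCM.run (M : TCM) : ℕ → Option Config
  | 0 => some (0, 0, 0, 0)
  | n + 1 => (M.run n).bind M.next

/-- The machine halts: some reachable configuration has no successor. -/
def TCM.Halts (M : TCM) : Prop := ∃ n C, M.run n = some C ∧ M.next C = none

/-! ### Prime encoding of configurations -/

/-- The least prime strictly greater than `n` (computably). -/
def nextPrime (n : ℕ) : ℕ := Nat.find (Nat.exists_infinite_primes (n + 1))

/-- `prm i` is the `(i+1)`-st prime `p_{i+1}`, i.e. `prm 0 = 2`. -/
def prm : ℕ → ℕ
  | 0 => 2
  | k + 1 => nextPrime (prm k)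

/-- Encoding of a configuration as a natural number. -/
def TCM.enc (M : TCM) (C : Config) : ℕ :=
  prm C.1 * prm M.m ^ C.2.1 * prm (M.m + 1) ^ C.2.2.1 * prm (M.m + 2) ^ C.2.2.2

/-- `p = p₁ ⋯ p_{m+3}`. -/
def TCM.p (M : TCM) : ℕ := ∏ i ∈ Finset.range (M.m + 3), prm i

/-- Decode the state from a residue modulo `M.p`. -/
def TCM.stateOf (M : TCM) (i : ℕ) : Option ℕ :=
  (List.range M.m).find? fun s => decide (prm s ∣ i)

/-- The canonical pair `(q_i, r_i)` realizing the prime encoding of the transitions. -/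
def TCM.qr (M : TCM) (i : ℕ) : ℕ × ℕ :=
  match M.stateOf i with
  | none => (1, 1)
  | some s =>
      let b1 : Bool := decide (prm M.m ∣ i)
      let b2 : Bool := decide (prm (M.m + 1) ∣ i)
      match M.step s b1 b2 with
      | none => (1, 1)
      | some (s', d1, d2) =>
          let e1 : ℤ := if b1 then d1 else max d1 0
          let e2 : ℤ := if b2 then d2 else max d2 0
          let num : ℕ := prm s' * prm (M.m + 2) *
            (if e1 = 1 then prm M.m else 1) * (if e2 = 1 then prm (M.m + 1) else 1)
          let den : ℕ := prm s *
            (if e1 = -1 then prm M.m else 1) * (if e2 = -1 then prm (M.m + 1) else 1)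
          (num / Nat.gcd num den, den / Nat.gcd num den)

def TCM.qi (M : TCM) (i : ℕ) : ℕ := (M.qr i).1
def TCM.ri (M : TCM) (i : ℕ) : ℕ := (M.qr i).2

/-- `g(n) = q_{n mod p} · n / r_{n mod p}`. -/
def TCM.g (M : TCM) (n : ℕ) : ℕ := M.qi (n % M.p) * n / M.ri (n % M.p)

/-- `gᵏ(2)`. -/
def TCM.gIter (M : TCM) (k : ℕ) : ℕ := (M.g)^[k] 2

/-- `G = {gᵏ(2) : k ∈ ℕ}`. -/
def TCM.Gset (M : TCM) : Set ℕ := Set.range M.gIter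

/-! ### The rule set `R_M` -/

def pEnd : ℕ := 0
def pFlood : ℕ := 1
def pS0 : ℕ := 2
def pS : ℕ := 3
def pG : ℕ := 4
def pR (i : ℕ) : ℕ := 5 + 2 * i
def pT (i : ℕ) : ℕ := 6 + 2 * i

/-- `j`-th vertex of an `S`-path of length `n` from variable `a` to variable `b`
with fresh intermediate variables `base + 1, …, base + n − 1`. -/
def pathVar (a b base n j : ℕ) : FTerm :=
  if j = 0 then vt a else if j = n then vt b else vt (base + j)

/-- The atoms of `Sⁿ(x_a, x_b)`: an `S`-path of length `n`. -/
def spath (a b base n : ℕ) : Finset Atom :=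
  (Finset.range n).image fun j =>
    (pS, [pathVar a b base n j, pathVar a b base n (j + 1)])

/-- Rule (1): `S₀(x,y) → S(x,y)`. -/
def ruleS : Rule := ({(pS0, [vt 0, vt 1])}, {(pS, [vt 0, vt 1])})

/-- Rule (2): `R_i(x,y) ∧ S(y,z) → R_{i+1}(x,z)` (indices modulo `p`). -/
def ruleR (M : TCM) (i : ℕ) : Rule :=
  ({(pR i, [vt 0, vt 1]), (pS, [vt 1, vt 2])}, {(pR ((i + 1) % M.p), [vt 0, vt 2])})

/-- Rule (3): `T_i(x,y,z) ∧ S^{r_i}(y,y′) ∧ S^{q_i}(z,z′) → T_i(x,y′,z′)`. -/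
def ruleT (M : TCM) (i : ℕ) : Rule :=
  (({(pT i, [vt 0, vt 1, vt 2])} : Finset Atom) ∪ spath 1 3 10 (M.ri i) ∪
      spath 2 4 (11 + M.ri i) (M.qi i),
    {(pT i, [vt 0, vt 3, vt 4])})

/-- Rule (4): `S(x,y) → Flood(y)`. -/
def ruleFloodProp : Rule := ({(pS, [vt 0, vt 1])}, {(pFlood, [vt 1])})

/-- Rule (5): `End(x) → S(x,x)`. -/
def ruleSEnd : Rule := ({(pEnd, [vt 0])}, {(pS, [vt 0, vt 0])})

/-- Rule (6): `S²(x,y) → G(x,y)`. -/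
def ruleGInit : Rule := (spath 0 1 10 2, {(pG, [vt 0, vt 1])})

/-- Rule (7): `G(x,y) ∧ R_i(x,y) ∧ T_i(x,y,z) → G(x,z)`. -/
def ruleGStep (i : ℕ) : Rule :=
  ({(pG, [vt 0, vt 1]), (pR i, [vt 0, vt 1]), (pT i, [vt 0, vt 1, vt 2])},
    {(pG, [vt 0, vt 2])})

/-- Rule (8): `Flood(x) ∧ Flood(y) ∧ Flood(z) → G(x,y) ∧ ⋀_{j<p} (R_j(x,y) ∧ T_j(x,y,z))`. -/
def ruleFloodGen (M : TCM) : Rule :=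
  ({(pFlood, [vt 0]), (pFlood, [vt 1]), (pFlood, [vt 2])},
    ({(pG, [vt 0, vt 1])} : Finset Atom) ∪
      (Finset.range M.p).biUnion fun j =>
        {(pR j, [vt 0, vt 1]), (pT j, [vt 0, vt 1, vt 2])})

/-- Rule (9): `G(y,z) ∧ End(z) → ∃x (S₀(x,y) ∧ R₀(x,x) ∧ ⋀_{j<p} T_j(x,x,x))`. -/
def ruleEx (M : TCM) : Rule :=
  ({(pG, [vt 1, vt 2]), (pEnd, [vt 2])},
    ({(pS0, [vt 0, vt 1]), (pR 0, [vt 0, vt 0])} : Finset Atom) ∪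
      (Finset.range M.p).biUnion fun j => {(pT j, [vt 0, vt 0, vt 0])})

/-- The rule set `R_M`. -/
def RM (M : TCM) : Finset Rule :=
  ({ruleS, ruleFloodProp, ruleSEnd, ruleGInit, ruleFloodGen M, ruleEx M} : Finset Rule) ∪
    (Finset.range M.p).biUnion fun i => {ruleR M i, ruleT M i, ruleGStep i}

/-- The alternating Datalog/non-Datalog chase steps `Step^X_n`. -/
def StepX (X : ChaseVariant) (M : TCM) : ℕ → Set Atom → Set Atom
  | 0, I => ChX X (DatRules (RM M)) I
  | n + 1, I => ChX X (DatRules (RM M)) (ChX X (NDatRules (RM M)) (StepX X M n I))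

/-- The constant `w`, the "well of positivity". -/
def wC : FTerm := ct 0

/-- The instance `{End(w)}`. -/
def IE : Set Atom := {(pEnd, [wC])}

/-- Membership in the signature of `R_M` (predicate together with its arity). -/
def InSig (M : TCM) (a : Atom) : Prop :=
  ((a.1 = pEnd ∨ a.1 = pFlood) ∧ a.2.length = 1) ∨
  ((a.1 = pS0 ∨ a.1 = pS ∨ a.1 = pG ∨ ∃ i < M.p, a.1 = pR i) ∧ a.2.length = 2) ∨
  ((∃ i < M.p, a.1 = pT i) ∧ a.2.length = 3)

/-- The critical instance: all atoms `P(w, …, w)` over the signature of `R_M`. -/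
def Crit (M : TCM) : Set Atom := {a | InSig M a ∧ ∀ t ∈ a.2, t = wC}

/-- An `S`-path of length `k` from `s` to `t` in `J`. -/
def SPath (J : Set Atom) : ℕ → FTerm → FTerm → Prop
  | 0, s, t => s = t
  | k + 1, s, t => ∃ u, (pS, [s, u]) ∈ J ∧ SPath J k u t

/-- The restriction `J|_S`: atoms of `J` all of whose terms belong to `S`. -/
def restrictTo (J : Set Atom) (S : Set FTerm) : Set Atom := {a ∈ J | ∀ t ∈ a.2, t ∈ S}

/-- An explicit injective encoding of three-counter machines by natural numbers. -/
def encodeTCM (M : TCM) : ℕ := Encodable.encode (M.m, M.δ)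

/-! ### Auxiliary development -/

section Aux

open Sum

lemma applyT_const (σ : Subst) (c : ℕ) : applyT σ (Sum.inl c) = Sum.inl c := rfl

lemma applyT_var (σ : Subst) (v : Var) : applyT σ (Sum.inr v) = σ v := rfl

lemma mem_atomVarsF {v : Var} {a : Atom} : v ∈ atomVarsF a ↔ Sum.inr v ∈ a.2 := by
  simp only [atomVarsF, List.mem_toFinset, List.mem_filterMap]
  constructor
  · rintro ⟨t, ht, hv⟩
    cases t with
    | inl c => simp [Sum.getRight?] at hv
    | inr u => simp [Sum.getRight?] at hv; subst hv; exact ht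
  · intro h; exact ⟨Sum.inr v, h, rfl⟩

lemma mem_varsF {v : Var} {A : Finset Atom} : v ∈ varsF A ↔ ∃ a ∈ A, Sum.inr v ∈ a.2 := by
  simp [varsF, mem_atomVarsF]

lemma mem_adom {t : FTerm} {J : Set Atom} : t ∈ adom J ↔ ∃ a ∈ J, t ∈ a.2 := Iff.rfl

lemma mem_setVars {v : Var} {J : Set Atom} : v ∈ setVars J ↔ ∃ a ∈ J, Sum.inr v ∈ a.2 := Iff.rfl

lemma adom_mono {J K : Set Atom} (h : J ⊆ K) : adom J ⊆ adom K := by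
  rintro t ⟨a, ha, hta⟩; exact ⟨a, h ha, hta⟩

lemma adom_union {J K : Set Atom} : adom (J ∪ K) = adom J ∪ adom K := by
  ext t; constructor
  · rintro ⟨a, (h | h), ht⟩
    · exact Or.inl ⟨a, h, ht⟩
    · exact Or.inr ⟨a, h, ht⟩
  · rintro (⟨a, h, ht⟩ | ⟨a, h, ht⟩)
    · exact ⟨a, Or.inl h, ht⟩
    · exact ⟨a, Or.inr h, ht⟩

/-- If `σ` is a homomorphism from `A` (a finset body) to `J` and `v` occurs in `A`,
then `σ v` occurs in `J`. -/
lemma sub_mem_adom {σ : Subst} {A : Finset Atom} {J : Set Atom}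
    (h : IsHomOn σ (A : Set Atom) J) {v : Var} (hv : v ∈ varsF A) : σ v ∈ adom J := by
  obtain ⟨a, ha, hva⟩ := mem_varsF.1 hv
  refine ⟨applyA σ a, h a ha, ?_⟩
  have : applyT σ (Sum.inr v) ∈ a.2.map (applyT σ) := List.mem_map_of_mem hva
  exact this

lemma setVar_mem_adom {v : Var} {J : Set Atom} (h : v ∈ setVars J) : Sum.inr v ∈ adom J := h

end Aux

section RuleFacts

lemma varsF_mono {A B : Finset Atom} (h : A ⊆ B) : varsF A ⊆ varsF B := by
  intro v hv
  obtain ⟨a, ha, hva⟩ := mem_varsF.1 hv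
  exact mem_varsF.2 ⟨a, h ha, hva⟩

lemma mem_RM {M : TCM} {R : Rule} : R ∈ RM M ↔
    R = ruleS ∨ R = ruleFloodProp ∨ R = ruleSEnd ∨ R = ruleGInit ∨ R = ruleFloodGen M ∨
      R = ruleEx M ∨ ∃ i < M.p, R = ruleR M i ∨ R = ruleT M i ∨ R = ruleGStep i := by
  simp only [RM, Finset.mem_union, Finset.mem_insert, Finset.mem_singleton,
    Finset.mem_biUnion, Finset.mem_range]
  constructor
  · rintro (h | ⟨i, hi, h⟩)
    · tauto
    · exact Or.inr (Or.inr (Or.inr (Or.inr (Or.inr (Or.inr ⟨i, hi, h⟩)))))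
  · rintro (h | h | h | h | h | h | ⟨i, hi, h⟩)
    · exact Or.inl (Or.inl h)
    · exact Or.inl (Or.inr (Or.inl h))
    · exact Or.inl (Or.inr (Or.inr (Or.inl h)))
    · exact Or.inl (Or.inr (Or.inr (Or.inr (Or.inl h))))
    · exact Or.inl (Or.inr (Or.inr (Or.inr (Or.inr (Or.inl h)))))
    · exact Or.inl (Or.inr (Or.inr (Or.inr (Or.inr (Or.inr h)))))
    · exact Or.inr ⟨i, hi, h⟩

lemma inl_left_mem_spath {a b base n : ℕ} (hn : 0 < n) :
    Sum.inl a ∈ varsF (spath a b base n) := by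
  refine mem_varsF.2 ⟨(pS, [pathVar a b base n 0, pathVar a b base n 1]), ?_, ?_⟩
  · exact Finset.mem_image_of_mem _ (Finset.mem_range.2 hn)
  · simp [pathVar, vt]

lemma inl_right_mem_spath {a b base n : ℕ} (hn : 0 < n) :
    Sum.inl b ∈ varsF (spath a b base n) := by
  refine mem_varsF.2 ⟨(pS, [pathVar a b base n (n-1), pathVar a b base n ((n-1)+1)]), ?_, ?_⟩
  · exact Finset.mem_image_of_mem _ (Finset.mem_range.2 (by omega))
  · have h1 : (n-1)+1 = n := by omega
    have h0 : ¬ (n = 0) := by omega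
    rw [h1]
    simp [pathVar, h0, vt]

lemma prm_pos (k : ℕ) : 0 < prm k := by
  induction k with
  | zero => norm_num [prm]
  | succ k ih =>
    have h := (Nat.find_spec (Nat.exists_infinite_primes (prm k + 1))).2.pos
    simpa [prm, nextPrime] using h

lemma div_gcd_pos {num den : ℕ} (hnum : 0 < num) (hden : 0 < den) :
    0 < num / Nat.gcd num den ∧ 0 < den / Nat.gcd num den := by
  constructor
  · exact Nat.div_pos (Nat.le_of_dvd hnum (Nat.gcd_dvd_left _ _))
      (Nat.gcd_pos_of_pos_left _ hnum)
  · exact Nat.div_pos (Nat.le_of_dvd hden (Nat.gcd_dvd_right _ _))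
      (Nat.gcd_pos_of_pos_right _ hden)

lemma qr_pos (M : TCM) (i : ℕ) : 0 < (M.qr i).1 ∧ 0 < (M.qr i).2 := by
  unfold TCM.qr
  cases hs : M.stateOf i with
  | none => simp
  | some s =>
    simp only
    cases hstep : M.step s (decide (prm M.m ∣ i)) (decide (prm (M.m+1) ∣ i)) with
    | none => simp [hstep]
    | some x =>
      obtain ⟨s', d1, d2⟩ := x
      simp only [hstep]
      refine div_gcd_pos ?_ ?_ <;>
        (repeat' apply Nat.mul_pos) <;>
        first
          | exact prm_pos _
          | (split_ifs <;> first | exact prm_pos _ | exact Nat.one_pos)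

lemma qi_pos (M : TCM) (i : ℕ) : 0 < M.qi i := (qr_pos M i).1
lemma ri_pos (M : TCM) (i : ℕ) : 0 < M.ri i := (qr_pos M i).2

lemma dat_ruleS : varsF ruleS.2 ⊆ varsF ruleS.1 := by
  intro v hv
  obtain ⟨a, ha, hva⟩ := mem_varsF.1 hv
  simp only [ruleS, Finset.mem_singleton] at ha
  subst ha
  exact mem_varsF.2 ⟨(pS0, [vt 0, vt 1]), by simp [ruleS], by simpa using hva⟩

lemma dat_ruleFloodProp : varsF ruleFloodProp.2 ⊆ varsF ruleFloodProp.1 := by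
  intro v hv
  obtain ⟨a, ha, hva⟩ := mem_varsF.1 hv
  simp only [ruleFloodProp, Finset.mem_singleton] at ha
  subst ha
  simp only [vt, List.mem_singleton] at hva
  refine mem_varsF.2 ⟨(pS, [vt 0, vt 1]), by simp [ruleFloodProp], ?_⟩
  simp [vt, hva]

lemma dat_ruleSEnd : varsF ruleSEnd.2 ⊆ varsF ruleSEnd.1 := by
  intro v hv
  obtain ⟨a, ha, hva⟩ := mem_varsF.1 hv
  simp only [ruleSEnd, Finset.mem_singleton] at ha
  subst ha
  simp only [vt, List.mem_cons, List.mem_singleton, List.not_mem_nil, or_false] at hva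
  refine mem_varsF.2 ⟨(pEnd, [vt 0]), by simp [ruleSEnd], ?_⟩
  rcases hva with h | h <;> simp [vt, h]

lemma dat_ruleGInit : varsF ruleGInit.2 ⊆ varsF ruleGInit.1 := by
  intro v hv
  obtain ⟨a, ha, hva⟩ := mem_varsF.1 hv
  simp only [ruleGInit, Finset.mem_singleton] at ha
  subst ha
  simp only [vt, List.mem_cons, List.mem_singleton, List.not_mem_nil, or_false] at hva
  show v ∈ varsF ruleGInit.1
  rcases hva with h | h
  · cases h; exact inl_left_mem_spath (by norm_num)
  · cases h; exact inl_right_mem_spath (by norm_num)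

lemma dat_ruleR (M : TCM) (i : ℕ) : varsF (ruleR M i).2 ⊆ varsF (ruleR M i).1 := by
  intro v hv
  obtain ⟨a, ha, hva⟩ := mem_varsF.1 hv
  simp only [ruleR, Finset.mem_singleton] at ha
  subst ha
  simp only [vt, List.mem_cons, List.mem_singleton, List.not_mem_nil, or_false] at hva
  rcases hva with h | h
  · cases h; exact mem_varsF.2 ⟨(pR i, [vt 0, vt 1]), by simp [ruleR], by simp [vt]⟩
  · cases h; exact mem_varsF.2 ⟨(pS, [vt 1, vt 2]), by simp [ruleR], by simp [vt]⟩

lemma dat_ruleT (M : TCM) (i : ℕ) : varsF (ruleT M i).2 ⊆ varsF (ruleT M i).1 := by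
  intro v hv
  obtain ⟨a, ha, hva⟩ := mem_varsF.1 hv
  simp only [ruleT, Finset.mem_singleton] at ha
  subst ha
  simp only [vt, List.mem_cons, List.mem_singleton, List.not_mem_nil, or_false] at hva
  have h1 : ({(pT i, [vt 0, vt 1, vt 2])} : Finset Atom) ⊆ (ruleT M i).1 := by
    intro x hx; simp only [ruleT, Finset.mem_union]; exact Or.inl (Or.inl hx)
  have h2 : spath 1 3 10 (M.ri i) ⊆ (ruleT M i).1 := by
    intro x hx; simp only [ruleT, Finset.mem_union]; exact Or.inl (Or.inr hx)
  have h3 : spath 2 4 (11 + M.ri i) (M.qi i) ⊆ (ruleT M i).1 := by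
    intro x hx; simp only [ruleT, Finset.mem_union]; exact Or.inr hx
  rcases hva with h | h | h
  · cases h
    exact varsF_mono h1 (mem_varsF.2 ⟨_, Finset.mem_singleton_self _, by simp [vt]⟩)
  · cases h; exact varsF_mono h2 (inl_right_mem_spath (ri_pos M i))
  · cases h; exact varsF_mono h3 (inl_right_mem_spath (qi_pos M i))

lemma dat_ruleGStep (i : ℕ) : varsF (ruleGStep i).2 ⊆ varsF (ruleGStep i).1 := by
  intro v hv
  obtain ⟨a, ha, hva⟩ := mem_varsF.1 hv
  simp only [ruleGStep, Finset.mem_singleton] at ha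
  subst ha
  simp only [vt, List.mem_cons, List.mem_singleton, List.not_mem_nil, or_false] at hva
  rcases hva with h | h <;> cases h <;>
    exact mem_varsF.2 ⟨(pT i, [vt 0, vt 1, vt 2]), by simp [ruleGStep], by simp [vt]⟩

lemma mem_ruleFloodGen_head {M : TCM} {a : Atom} :
    a ∈ (ruleFloodGen M).2 ↔ a = (pG, [vt 0, vt 1]) ∨
      ∃ j < M.p, a = (pR j, [vt 0, vt 1]) ∨ a = (pT j, [vt 0, vt 1, vt 2]) := by
  simp only [ruleFloodGen, Finset.mem_union, Finset.mem_singleton, Finset.mem_biUnion,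
    Finset.mem_range, Finset.mem_insert]
  try tauto

lemma dat_ruleFloodGen (M : TCM) : varsF (ruleFloodGen M).2 ⊆ varsF (ruleFloodGen M).1 := by
  intro v hv
  obtain ⟨a, ha, hva⟩ := mem_varsF.1 hv
  rw [mem_ruleFloodGen_head] at ha
  have hbody : ∀ c : ℕ, c ≤ 2 → Sum.inl c ∈ varsF (ruleFloodGen M).1 := by
    intro c hc
    refine mem_varsF.2 ⟨(pFlood, [vt c]), ?_, by simp [vt]⟩
    interval_cases c <;> simp [ruleFloodGen]
  rcases ha with rfl | ⟨j, hj, rfl | rfl⟩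
  · simp only [vt, List.mem_cons, List.not_mem_nil, or_false, Sum.inr.injEq] at hva
    rcases hva with rfl | rfl
    · exact hbody 0 (by norm_num)
    · exact hbody 1 (by norm_num)
  · simp only [vt, List.mem_cons, List.not_mem_nil, or_false, Sum.inr.injEq] at hva
    rcases hva with rfl | rfl
    · exact hbody 0 (by norm_num)
    · exact hbody 1 (by norm_num)
  · simp only [vt, List.mem_cons, List.not_mem_nil, or_false, Sum.inr.injEq] at hva
    rcases hva with rfl | rfl | rfl
    · exact hbody 0 (by norm_num)
    · exact hbody 1 (by norm_num)
    · exact hbody 2 (by norm_num)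

lemma mem_ruleEx_head {M : TCM} {a : Atom} :
    a ∈ (ruleEx M).2 ↔ a = (pS0, [vt 0, vt 1]) ∨ a = (pR 0, [vt 0, vt 0]) ∨
      ∃ j < M.p, a = (pT j, [vt 0, vt 0, vt 0]) := by
  simp only [ruleEx, Finset.mem_union, Finset.mem_insert, Finset.mem_singleton,
    Finset.mem_biUnion, Finset.mem_range]
  tauto

lemma varsF_exBody (M : TCM) : varsF (ruleEx M).1 = {Sum.inl 1, Sum.inl 2} := by
  ext v
  rw [mem_varsF]
  constructor
  · rintro ⟨a, ha, hva⟩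
    simp only [ruleEx, Finset.mem_insert, Finset.mem_singleton] at ha
    rcases ha with rfl | rfl <;>
      simp only [vt, List.mem_cons, List.mem_singleton, List.not_mem_nil, or_false] at hva <;>
      rcases hva with h | h <;> (try cases h) <;> simp_all
  · intro hv
    simp only [Finset.mem_insert, Finset.mem_singleton] at hv
    rcases hv with rfl | rfl
    · exact ⟨(pG, [vt 1, vt 2]), by simp [ruleEx], by simp [vt]⟩
    · exact ⟨(pEnd, [vt 2]), by simp [ruleEx], by simp [vt]⟩

lemma ndat_ruleEx (M : TCM) : ¬ varsF (ruleEx M).2 ⊆ varsF (ruleEx M).1 := by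
  intro h
  have h0 : Sum.inl 0 ∈ varsF (ruleEx M).2 :=
    mem_varsF.2 ⟨(pS0, [vt 0, vt 1]), mem_ruleEx_head.2 (Or.inl rfl), by simp [vt]⟩
  have := h h0
  rw [varsF_exBody] at this
  simp at this

lemma dat_of_mem {M : TCM} {R : Rule} (hR : R ∈ RM M) (hne : R ≠ ruleEx M) :
    varsF R.2 ⊆ varsF R.1 := by
  rcases mem_RM.1 hR with rfl | rfl | rfl | rfl | rfl | rfl | ⟨i, hi, rfl | rfl | rfl⟩
  · exact dat_ruleS
  · exact dat_ruleFloodProp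
  · exact dat_ruleSEnd
  · exact dat_ruleGInit
  · exact dat_ruleFloodGen M
  · exact absurd rfl hne
  · exact dat_ruleR M i
  · exact dat_ruleT M i
  · exact dat_ruleGStep i

lemma ruleEx_mem_RM (M : TCM) : ruleEx M ∈ RM M := by
  rw [mem_RM]; tauto

lemma mem_NDat {M : TCM} {R : Rule} : R ∈ NDatRules (RM M) ↔ R = ruleEx M := by
  rw [NDatRules, Finset.mem_filter]
  constructor
  · rintro ⟨hmem, hnd⟩
    by_contra hne
    exact hnd (dat_of_mem hmem hne)
  · rintro rfl
    exact ⟨ruleEx_mem_RM M, ndat_ruleEx M⟩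

lemma mem_Dat {M : TCM} {R : Rule} (h : R ∈ DatRules (RM M)) :
    R ∈ RM M ∧ varsF R.2 ⊆ varsF R.1 ∧ R ≠ ruleEx M := by
  rw [DatRules, Finset.mem_filter] at h
  refine ⟨h.1, h.2, ?_⟩
  rintro rfl
  exact ndat_ruleEx M h.2

end RuleFacts

section ChaseFacts

variable {M : TCM} {X : ChaseVariant}

def ClosedUnder (Rset : Finset Rule) (J : Set Atom) : Prop :=
  ∀ t : Trigger, t.rule ∈ Rset → t.isOn J → (t.out : Set Atom) ⊆ J

lemma IsHomOn.mono_right {σ : Subst} {A B C : Set Atom} (h : IsHomOn σ A B) (hBC : B ⊆ C) :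
    IsHomOn σ A C := fun a ha => hBC (h a ha)

lemma IsHomOn.mono_left {σ : Subst} {A B C : Set Atom} (h : IsHomOn σ A B) (hCA : C ⊆ A) :
    IsHomOn σ C B := fun a ha => h a (hCA ha)

lemma instSeq_succ (I : Set Atom) (steps : ℕ → Option Trigger) (n : ℕ) :
    instSeq I steps (n + 1) = instSeq I steps n ∪
      (match steps n with
        | none => (∅ : Set Atom)
        | some t => (t.out : Set Atom)) := rfl

lemma instSeq_subset_succ (I : Set Atom) (steps : ℕ → Option Trigger) (n : ℕ) :
    instSeq I steps n ⊆ instSeq I steps (n + 1) := by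
  rw [instSeq_succ]; exact Set.subset_union_left

lemma instSeq_mono (I : Set Atom) (steps : ℕ → Option Trigger) {i j : ℕ} (h : i ≤ j) :
    instSeq I steps i ⊆ instSeq I steps j := by
  induction j with
  | zero => simp_all
  | succ j ih =>
    rcases Nat.lt_or_ge i (j+1) with hlt | hge
    · exact (ih (by omega)).trans (instSeq_subset_succ I steps j)
    · have : i = j + 1 := by omega
      subst this; exact fun _ h => h

lemma subset_instSeq (I : Set Atom) (steps : ℕ → Option Trigger) (n : ℕ) :
    I ⊆ instSeq I steps n := instSeq_mono I steps (Nat.zero_le n)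

lemma inst_subset_res {Rset : Finset Rule} {I : Set Atom} (D : Deriv Rset I) (n : ℕ) :
    D.inst n ⊆ D.res := Set.subset_iUnion (fun n => D.inst n) n

lemma subset_res {Rset : Finset Rule} {I : Set Atom} (D : Deriv Rset I) : I ⊆ D.res :=
  (subset_instSeq I D.steps 0).trans (inst_subset_res D 0)

lemma finite_subset_inst {Rset : Finset Rule} {I : Set Atom} {D : Deriv Rset I}
    {S : Finset Atom} (h : (S : Set Atom) ⊆ D.res) : ∃ n, (S : Set Atom) ⊆ D.inst n := by
  induction S using Finset.induction with
  | empty => exact ⟨0, by simp⟩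
  | @insert a S ha ih =>
    obtain ⟨n, hn⟩ := ih (fun x hx =>
      h (Finset.mem_coe.2 (Finset.mem_insert_of_mem (Finset.mem_coe.1 hx))))
    have haR : a ∈ D.res := h (Finset.mem_coe.2 (Finset.mem_insert_self a S))
    obtain ⟨m, hm⟩ := Set.mem_iUnion.1 haR
    refine ⟨max n m, ?_⟩
    intro x hx
    rcases Finset.mem_insert.1 (Finset.mem_coe.1 hx) with rfl | hx'
    · exact instSeq_mono I D.steps (le_max_right n m) hm
    · exact instSeq_mono I D.steps (le_max_left n m) (hn (Finset.mem_coe.2 hx'))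

lemma ChX_of_closed {Rset : Finset Rule} {J : Set Atom} (h : ClosedUnder Rset J) :
    ChX X Rset J = J := by
  rw [ChX]
  split_ifs with hex
  · have key : ∀ n, instSeq J hex.choose.steps n = J := by
      intro n
      induction n with
      | zero => rfl
      | succ n ih =>
        have hnone : hex.choose.steps n = none := by
          cases hs : hex.choose.steps n with
          | none => rfl
          | some t =>
            obtain ⟨hrule, hon, hout⟩ := hex.choose.valid n t hs
            rw [ih] at hon hout
            exact absurd (h t hrule hon) hout
        rw [instSeq_succ, hnone, ih]
        simp
    ext x
    simp only [Deriv.res, Deriv.inst, Set.mem_iUnion]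
    constructor
    · rintro ⟨n, hn⟩; rw [key n] at hn; exact hn
    · intro hx; exact ⟨0, hx⟩
  · rfl

lemma applyA_fst (σ : Subst) (a : Atom) : (applyA σ a).1 = a.1 := rfl

lemma applyA_fix {σ : Subst} {a : Atom}
    (h : ∀ u ∈ a.2, applyT σ u = u) : applyA σ a = a := by
  unfold applyA
  have : a.2.map (applyT σ) = a.2.map id := List.map_congr_left h
  rw [this, List.map_id]

lemma out_eq_of_frontier {t t' : Trigger} (hr : t'.rule = t.rule)
    (hdat : varsF t.rule.2 ⊆ varsF t.rule.1)
    (hfr : ∀ v ∈ frontierOf t.rule, t'.sub v = t.sub v) : t'.out = t.out := by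
  unfold Trigger.out
  rw [hr]
  apply Finset.image_congr
  intro a ha
  unfold applyA
  refine congrArg _ ?_
  apply List.map_congr_left
  intro u hu
  cases u with
  | inl c => rfl
  | inr v =>
    have hv2 : v ∈ varsF t.rule.2 := mem_varsF.2 ⟨a, ha, hu⟩
    have hv1 : v ∈ varsF t.rule.1 := hdat hv2
    have hfr' : v ∈ frontierOf t.rule := Finset.mem_inter.2 ⟨hv1, hv2⟩
    show applyT t'.extSub (Sum.inr v) = applyT t.extSub (Sum.inr v)
    simp only [applyT]
    unfold Trigger.extSub
    rw [hr, if_pos hv1, if_pos hv1]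
    exact hfr v hfr'

/-- Heads of Datalog rules of `R_M`: predicates are not `S₀` nor `End`, and every
argument is a variable of the body. -/
lemma dat_head {R : Rule} (hR : R ∈ DatRules (RM M)) :
    ∀ a ∈ R.2, (a.1 ≠ pS0 ∧ a.1 ≠ pEnd) ∧
      ∀ u ∈ a.2, ∃ hv : Var, u = Sum.inr hv ∧ hv ∈ varsF R.1 := by
  obtain ⟨hmem, hdat, hne⟩ := mem_Dat hR
  have main : ∀ a ∈ R.2, (a.1 ≠ pS0 ∧ a.1 ≠ pEnd) ∧
      ∀ u ∈ a.2, ∃ hv : Var, u = Sum.inr hv := by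
    rcases mem_RM.1 hmem with rfl | rfl | rfl | rfl | rfl | rfl | ⟨i, hi, rfl | rfl | rfl⟩
    · intro a ha
      simp only [ruleS, Finset.mem_singleton] at ha
      subst ha
      refine ⟨⟨by show pS ≠ pS0; simp only [pS, pS0]; omega,
        by show pS ≠ pEnd; simp only [pS, pEnd]; omega⟩, ?_⟩
      intro u hu
      simp only [vt, List.mem_cons, List.not_mem_nil, or_false] at hu
      rcases hu with rfl | rfl <;> exact ⟨_, rfl⟩
    · intro a ha
      simp only [ruleFloodProp, Finset.mem_singleton] at ha
      subst ha
      refine ⟨⟨by show pFlood ≠ pS0; simp only [pFlood, pS0]; omega,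
        by show pFlood ≠ pEnd; simp only [pFlood, pEnd]; omega⟩, ?_⟩
      intro u hu
      simp only [vt, List.mem_cons, List.not_mem_nil, or_false] at hu
      rcases hu with rfl <;> exact ⟨_, rfl⟩
    · intro a ha
      simp only [ruleSEnd, Finset.mem_singleton] at ha
      subst ha
      refine ⟨⟨by show pS ≠ pS0; simp only [pS, pS0]; omega,
        by show pS ≠ pEnd; simp only [pS, pEnd]; omega⟩, ?_⟩
      intro u hu
      simp only [vt, List.mem_cons, List.not_mem_nil, or_false] at hu
      rcases hu with rfl | rfl <;> exact ⟨_, rfl⟩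
    · intro a ha
      simp only [ruleGInit, Finset.mem_singleton] at ha
      subst ha
      refine ⟨⟨by show pG ≠ pS0; simp only [pG, pS0]; omega,
        by show pG ≠ pEnd; simp only [pG, pEnd]; omega⟩, ?_⟩
      intro u hu
      simp only [vt, List.mem_cons, List.not_mem_nil, or_false] at hu
      rcases hu with rfl | rfl <;> exact ⟨_, rfl⟩
    · intro a ha
      rw [mem_ruleFloodGen_head] at ha
      rcases ha with rfl | ⟨j, hj, rfl | rfl⟩
      · refine ⟨⟨by show pG ≠ pS0; simp only [pG, pS0]; omega,
          by show pG ≠ pEnd; simp only [pG, pEnd]; omega⟩, ?_⟩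
        intro u hu
        simp only [vt, List.mem_cons, List.not_mem_nil, or_false] at hu
        rcases hu with rfl | rfl <;> exact ⟨_, rfl⟩
      · refine ⟨⟨by show pR j ≠ pS0; simp only [pR, pS0]; omega,
          by show pR j ≠ pEnd; simp only [pR, pEnd]; omega⟩, ?_⟩
        intro u hu
        simp only [vt, List.mem_cons, List.not_mem_nil, or_false] at hu
        rcases hu with rfl | rfl <;> exact ⟨_, rfl⟩
      · refine ⟨⟨by show pT j ≠ pS0; simp only [pT, pS0]; omega,
          by show pT j ≠ pEnd; simp only [pT, pEnd]; omega⟩, ?_⟩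
        intro u hu
        simp only [vt, List.mem_cons, List.not_mem_nil, or_false] at hu
        rcases hu with rfl | rfl | rfl <;> exact ⟨_, rfl⟩
    · exact absurd rfl hne
    · intro a ha
      simp only [ruleR, Finset.mem_singleton] at ha
      subst ha
      refine ⟨⟨by show pR ((i+1) % M.p) ≠ pS0; simp only [pR, pS0]; omega,
        by show pR ((i+1) % M.p) ≠ pEnd; simp only [pR, pEnd]; omega⟩, ?_⟩
      intro u hu
      simp only [vt, List.mem_cons, List.not_mem_nil, or_false] at hu
      rcases hu with rfl | rfl <;> exact ⟨_, rfl⟩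
    · intro a ha
      simp only [ruleT, Finset.mem_singleton] at ha
      subst ha
      refine ⟨⟨by show pT i ≠ pS0; simp only [pT, pS0]; omega,
        by show pT i ≠ pEnd; simp only [pT, pEnd]; omega⟩, ?_⟩
      intro u hu
      simp only [vt, List.mem_cons, List.not_mem_nil, or_false] at hu
      rcases hu with rfl | rfl | rfl <;> exact ⟨_, rfl⟩
    · intro a ha
      simp only [ruleGStep, Finset.mem_singleton] at ha
      subst ha
      refine ⟨⟨by show pG ≠ pS0; simp only [pG, pS0]; omega,
        by show pG ≠ pEnd; simp only [pG, pEnd]; omega⟩, ?_⟩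
      intro u hu
      simp only [vt, List.mem_cons, List.not_mem_nil, or_false] at hu
      rcases hu with rfl | rfl <;> exact ⟨_, rfl⟩
  intro a ha
  obtain ⟨hp, hargs⟩ := main a ha
  refine ⟨hp, ?_⟩
  intro u hu
  obtain ⟨hv, rfl⟩ := hargs u hu
  exact ⟨hv, rfl, hdat (mem_varsF.2 ⟨a, ha, hu⟩)⟩

/-- Every argument of an atom of `t.out`, for a Datalog trigger, is `t.sub hv`
for some body variable `hv`. -/
lemma dat_out_arg {t : Trigger} (hR : t.rule ∈ DatRules (RM M)) {a' : Atom}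
    (ha' : a' ∈ t.out) :
    (∃ a ∈ t.rule.2, a' = applyA t.extSub a ∧ a'.1 = a.1) ∧
      ∀ u ∈ a'.2, ∃ hv : Var, hv ∈ varsF t.rule.1 ∧ u = t.sub hv := by
  obtain ⟨a, ha, rfl⟩ := Finset.mem_image.1 ha'
  refine ⟨⟨a, ha, rfl, rfl⟩, ?_⟩
  intro u hu
  obtain ⟨u₀, hu₀, rfl⟩ := List.mem_map.1 hu
  obtain ⟨hv, rfl, hv1⟩ := (dat_head hR a ha).2 u₀ hu₀
  refine ⟨hv, hv1, ?_⟩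
  show Trigger.extSub t hv = t.sub hv
  unfold Trigger.extSub
  rw [if_pos hv1]

end ChaseFacts

section Chain

variable {M : TCM} {X : ChaseVariant}

/-- The code of any `ruleEx`-trigger whose frontier values are `y` (for `vt 1`)
and `z` (for `vt 2`). -/
def codeEx (M : TCM) (y z : FTerm) : ℕ :=
  Encodable.encode ((ruleEx M, ({(Sum.inl 1, y), (Sum.inl 2, z)} : Finset (Var × FTerm))))

/-- The canonical fresh variable introduced by the `ruleEx`-trigger with frontier `y`. -/
def fE (M : TCM) (y : FTerm) : FTerm :=
  Sum.inr (Sum.inr (codeEx M y wC, Encodable.encode (Sum.inl 0 : Var)))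

/-- The chain of terms: `XP M 0 = w`, and `XP M (j+1)` the fresh variable created
by the trigger with frontier `XP M j`. -/
def XP (M : TCM) : ℕ → FTerm
  | 0 => wC
  | j + 1 => fE M (XP M j)

lemma fE_ne_w (M : TCM) (y : FTerm) : fE M y ≠ wC := by simp [fE, wC, ct]

lemma fE_inj {y y' : FTerm} (h : fE M y = fE M y') : y = y' := by
  simp only [fE, Sum.inr.injEq, Prod.mk.injEq] at h
  have hc : codeEx M y wC = codeEx M y' wC := h.1
  have := Encodable.encode_injective hc
  simp only [Prod.mk.injEq] at this
  have hfin : ({(Sum.inl 1, y), (Sum.inl 2, wC)} : Finset (Var × FTerm)) =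
      {(Sum.inl 1, y'), (Sum.inl 2, wC)} := this.2
  have hmem : ((Sum.inl 1 : Var), y) ∈
      ({(Sum.inl 1, y'), (Sum.inl 2, wC)} : Finset (Var × FTerm)) := by
    rw [← hfin]; simp
  simp only [Finset.mem_insert, Finset.mem_singleton, Prod.mk.injEq] at hmem
  rcases hmem with ⟨_, h⟩ | ⟨h, _⟩
  · exact h
  · simp at h

lemma XP_inj : ∀ {i j : ℕ}, XP M i = XP M j → i = j := by
  intro i
  induction i with
  | zero =>
    intro j h
    cases j with
    | zero => rfl
    | succ j => exact absurd h.symm (fE_ne_w M _)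
  | succ i ih =>
    intro j h
    cases j with
    | zero => exact absurd h (fE_ne_w M _)
    | succ j => rw [ih (fE_inj h)]

lemma XP_ne_w {j : ℕ} (h : 0 < j) : XP M j ≠ wC := by
  cases j with
  | zero => omega
  | succ j => exact fE_ne_w M _

/-- The `j`-th `S₀`-edge of the chain. -/
def edgeA (M : TCM) (j : ℕ) : Atom := (pS0, [XP M (j+1), XP M j])

/-- The canonical output of the `ruleEx`-trigger with frontier value `y`. -/
def exSub (M : TCM) (y : FTerm) : Subst := fun v =>
  if v = Sum.inl 1 then y else if v = Sum.inl 2 then wC else fE M y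

def exOut (M : TCM) (y : FTerm) : Finset Atom := (ruleEx M).2.image (applyA (exSub M y))

lemma exSub_zero (y : FTerm) : exSub M y (Sum.inl 0) = fE M y := by simp [exSub]
lemma exSub_one (y : FTerm) : exSub M y (Sum.inl 1) = y := by simp [exSub]

lemma mem_exOut {a : Atom} {y : FTerm} :
    a ∈ exOut M y ↔ a = (pS0, [fE M y, y]) ∨ a = (pR 0, [fE M y, fE M y]) ∨
      ∃ j < M.p, a = (pT j, [fE M y, fE M y, fE M y]) := by
  unfold exOut
  rw [Finset.mem_image]
  constructor
  · rintro ⟨b, hb, rfl⟩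
    rcases mem_ruleEx_head.1 hb with rfl | rfl | ⟨j, hj, rfl⟩
    · left; simp [applyA, applyT, vt, exSub_zero, exSub_one, exSub]
    · right; left; simp [applyA, applyT, vt, exSub]
    · right; right; exact ⟨j, hj, by simp [applyA, applyT, vt, exSub]⟩
  · rintro (rfl | rfl | ⟨j, hj, rfl⟩)
    · exact ⟨(pS0, [vt 0, vt 1]), mem_ruleEx_head.2 (Or.inl rfl),
        by simp [applyA, applyT, vt, exSub]⟩
    · exact ⟨(pR 0, [vt 0, vt 0]), mem_ruleEx_head.2 (Or.inr (Or.inl rfl)),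
        by simp [applyA, applyT, vt, exSub]⟩
    · exact ⟨(pT j, [vt 0, vt 0, vt 0]), mem_ruleEx_head.2 (Or.inr (Or.inr ⟨j, hj, rfl⟩)),
        by simp [applyA, applyT, vt, exSub]⟩

/-- Any trigger with rule `ruleEx` whose substitution sends `vt 2` to `w` has
output `exOut M y` where `y` is the value at `vt 1`. -/
lemma out_ruleEx {t : Trigger} (ht : t.rule = ruleEx M) (h2 : t.sub (Sum.inl 2) = wC) :
    t.out = exOut M (t.sub (Sum.inl 1)) := by
  have hcode : t.code = codeEx M (t.sub (Sum.inl 1)) wC := by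
    unfold Trigger.code codeEx
    rw [ht, varsF_exBody]
    congr 1
    rw [Finset.image_insert, Finset.image_singleton, h2]
  unfold Trigger.out exOut
  rw [ht]
  apply Finset.image_congr
  intro a ha
  have hargs : ∀ u ∈ a.2, u = vt 0 ∨ u = vt 1 := by
    rcases mem_ruleEx_head.1 ha with rfl | rfl | ⟨j, hj, rfl⟩ <;>
      (intro u hu;
       simp only [List.mem_cons, List.not_mem_nil, or_false] at hu <;> tauto)
  unfold applyA
  refine congrArg _ ?_
  apply List.map_congr_left
  intro u hu
  have hext0 : Trigger.extSub t (Sum.inl 0) = fE M (t.sub (Sum.inl 1)) := by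
    unfold Trigger.extSub
    rw [ht, varsF_exBody, if_neg (by simp), hcode]
    rfl
  have hext1 : Trigger.extSub t (Sum.inl 1) = t.sub (Sum.inl 1) := by
    unfold Trigger.extSub
    rw [ht, varsF_exBody, if_pos (by simp)]
  rcases hargs u hu with rfl | rfl
  · show applyT _ (vt 0) = applyT _ (vt 0)
    simp only [vt, applyT]
    rw [hext0, exSub_zero]
  · show applyT _ (vt 1) = applyT _ (vt 1)
    simp only [vt, applyT]
    rw [hext1, exSub_one]

lemma exOut_no_End {a : Atom} {y : FTerm} (ha : a ∈ exOut M y) : a.1 ≠ pEnd := by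
  rcases mem_exOut.1 ha with rfl | rfl | ⟨j, hj, rfl⟩ <;>
    (show _ ≠ pEnd; simp only [pS0, pR, pT, pEnd]; omega)

lemma exOut_no_G {a : Atom} {y : FTerm} (ha : a ∈ exOut M y) : a.1 ≠ pG := by
  rcases mem_exOut.1 ha with rfl | rfl | ⟨j, hj, rfl⟩ <;>
    (show _ ≠ pG; simp only [pS0, pR, pT, pG]; omega)

lemma exOut_S0 {a : Atom} {y : FTerm} (ha : a ∈ exOut M y) (h0 : a.1 = pS0) :
    a = (pS0, [fE M y, y]) := by
  rcases mem_exOut.1 ha with rfl | rfl | ⟨j, hj, rfl⟩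
  · rfl
  · exact absurd h0 (by show pR 0 ≠ pS0; simp only [pR, pS0]; omega)
  · exact absurd h0 (by show pT j ≠ pS0; simp only [pT, pS0]; omega)

lemma adom_exOut {u : FTerm} {y : FTerm} (h : u ∈ adom (exOut M y : Set Atom)) :
    u = fE M y ∨ u = y := by
  obtain ⟨a, ha, hu⟩ := h
  rcases mem_exOut.1 (Finset.mem_coe.1 ha) with rfl | rfl | ⟨j, hj, rfl⟩ <;>
    simp only [List.mem_cons, List.not_mem_nil, or_false] at hu <;> tauto

/-- The invariant shape of instances along the chase: `End`-atoms, `S₀`-atoms,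
and active domain are completely described. -/
structure Shape (M : TCM) (k : ℕ) (K : Set Atom) : Prop where
  hEnd : ∀ a ∈ K, a.1 = pEnd → a = (pEnd, [wC])
  hEndMem : (pEnd, [wC]) ∈ K
  hS0 : ∀ a ∈ K, a.1 = pS0 → ∃ j < k, a = edgeA M j
  hS0Mem : ∀ j < k, edgeA M j ∈ K
  hadom : ∀ u ∈ adom K, ∃ j ≤ k, u = XP M j

lemma Shape.sandwich {k : ℕ} {A K : Set Atom} (hA : Shape M k A) (hAK : A ⊆ K)
    (hEnd' : ∀ a ∈ K, a.1 = pEnd → a ∈ A) (hS0' : ∀ a ∈ K, a.1 = pS0 → a ∈ A)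
    (hadom' : ∀ u ∈ adom K, u ∈ adom A) : Shape M k K where
  hEnd := fun a ha h => hA.hEnd a (hEnd' a ha h) h
  hEndMem := hAK hA.hEndMem
  hS0 := fun a ha h => hA.hS0 a (hS0' a ha h) h
  hS0Mem := fun j hj => hAK (hA.hS0Mem j hj)
  hadom := fun u hu => hA.hadom u (hadom' u hu)

lemma atom2_eq {p q : ℕ} {a b c d : FTerm} (h : ((p, [a, b]) : Atom) = (q, [c, d])) :
    p = q ∧ a = c ∧ b = d := by
  simp only [Prod.mk.injEq, List.cons.injEq, and_true] at h
  tauto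

/-- Rigidity: on a chain-shaped instance, every endomorphism fixes all variables. -/
lemma Shape.rigid {k : ℕ} {K : Set Atom} (hK : Shape M k K) {σ : Subst}
    (hσ : IsHomOn σ K K) : ∀ v ∈ setVars K, σ v = Sum.inr v := by
  have key : ∀ j, j < k → applyT σ (XP M (j+1)) = XP M (j+1) := by
    intro j
    induction j with
    | zero =>
      intro hj
      have hm : applyA σ (edgeA M 0) ∈ K := hσ _ (hK.hS0Mem 0 hj)
      obtain ⟨j', hj', heq⟩ := hK.hS0 _ hm rfl
      have heq' : ((pS0, [applyT σ (XP M 1), applyT σ (XP M 0)]) : Atom) =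
          (pS0, [XP M (j'+1), XP M j']) := by
        simpa [applyA, edgeA] using heq
      obtain ⟨-, h1, h2⟩ := atom2_eq heq'
      have h2' : XP M j' = wC := by rw [← h2]; rfl
      have hj0 : j' = 0 := XP_inj (M := M) (show XP M j' = XP M 0 from h2')
      subst hj0
      exact h1
    | succ j ih =>
      intro hj
      have hm : applyA σ (edgeA M (j+1)) ∈ K := hσ _ (hK.hS0Mem (j+1) hj)
      obtain ⟨j', hj', heq⟩ := hK.hS0 _ hm rfl
      have heq' : ((pS0, [applyT σ (XP M (j+2)), applyT σ (XP M (j+1))]) : Atom) =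
          (pS0, [XP M (j'+1), XP M j']) := by
        simpa [applyA, edgeA] using heq
      obtain ⟨-, h1, h2⟩ := atom2_eq heq'
      rw [ih (by omega)] at h2
      have hj1 : j' = j + 1 := XP_inj (M := M) h2.symm
      subst hj1
      exact h1
  intro v hv
  obtain ⟨j, hjk, hXP⟩ := hK.hadom _ (setVar_mem_adom hv)
  cases j with
  | zero => exact absurd hXP (by simp [XP, wC, ct])
  | succ j =>
    calc σ v = applyT σ (XP M (j+1)) := by rw [← hXP]; rfl
    _ = XP M (j+1) := key j (by omega)
    _ = Sum.inr v := hXP.symm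

end Chain

section DatRound

variable {M : TCM} {X : ChaseVariant}

lemma out_subset_of_not_applicable {k : ℕ} {t : Trigger} {K : Set Atom}
    (hR : t.rule ∈ DatRules (RM M)) (hon : t.isOn K) (hK : Shape M k K)
    (hna : ¬ Applicable X t K) : (t.out : Set Atom) ⊆ K := by
  have hfix : ∀ σ : Subst, (∀ v ∈ setVars K, σ v = Sum.inr v) →
      ∀ a' ∈ t.out, applyA σ a' = a' := by
    intro σ hσ a' ha'
    apply applyA_fix
    intro u hu
    obtain ⟨-, hargs⟩ := dat_out_arg hR ha'
    obtain ⟨hv, hv1, rfl⟩ := hargs u hu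
    have hmem : t.sub hv ∈ adom K := sub_mem_adom hon hv1
    cases he : t.sub hv with
    | inl c => rfl
    | inr v =>
      rw [he] at hmem
      exact hσ v hmem
  cases X with
  | O =>
    simp only [Applicable, not_not] at hna
    exact hna
  | SO =>
    simp only [Applicable] at hna
    push_neg at hna
    obtain ⟨t', h1, h2, h3, h4⟩ := hna
    rw [← out_eq_of_frontier h1 (mem_Dat hR).2.1 h3]
    exact h4
  | R =>
    simp only [Applicable, not_not] at hna
    obtain ⟨σ, hhom, hid⟩ := hna
    intro a' ha'
    have hmem : applyA σ a' ∈ K := hhom a' (Or.inr ha')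
    have hfixed : applyA σ a' = a' := by
      apply hfix σ ?_ a' (Finset.mem_coe.1 ha')
      intro v hv
      exact hid v ⟨(by obtain ⟨a, ha, hva⟩ := hv; exact ⟨a, Or.inl ha, hva⟩), hv⟩
    rwa [hfixed] at hmem
  | E =>
    simp only [Applicable, not_not] at hna
    obtain ⟨σ, hhom⟩ := hna
    intro a' ha'
    have hmem : applyA σ a' ∈ K := hhom a' (Or.inr ha')
    have hfixed : applyA σ a' = a' :=
      hfix σ (hK.rigid (hhom.mono_left Set.subset_union_left)) a' (Finset.mem_coe.1 ha')
    rwa [hfixed] at hmem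

def Kstar (A : Set Atom) : Set Atom :=
  A ∪ {a | a.1 ≠ pS0 ∧ a.1 ≠ pEnd ∧ ∀ u ∈ a.2, u ∈ adom A}

lemma subset_Kstar (A : Set Atom) : A ⊆ Kstar A := Set.subset_union_left

lemma adom_Kstar (A : Set Atom) : adom (Kstar A) ⊆ adom A := by
  rintro u ⟨a, ha | ha, hu⟩
  · exact ⟨a, ha, hu⟩
  · exact ha.2.2 u hu

lemma Kstar_closed {A : Set Atom} : ClosedUnder (DatRules (RM M)) (Kstar A) := by
  intro t hR hon a' ha'
  obtain ⟨⟨a, ha, heq, hfst⟩, hargs⟩ := dat_out_arg hR (Finset.mem_coe.1 ha')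
  right
  refine ⟨?_, ?_, ?_⟩
  · rw [hfst]; exact (dat_head hR a ha).1.1
  · rw [hfst]; exact (dat_head hR a ha).1.2
  · intro u hu
    obtain ⟨hv, hv1, rfl⟩ := hargs u hu
    exact adom_Kstar A (sub_mem_adom hon hv1)

lemma shape_from_Kstar {k : ℕ} {A K : Set Atom} (hA : Shape M k A) (hAK : A ⊆ K)
    (hKs : K ⊆ Kstar A) : Shape M k K := by
  refine hA.sandwich hAK ?_ ?_ ?_
  · intro a ha h
    rcases hKs ha with h' | h'
    · exact h'
    · exact absurd h h'.2.1
  · intro a ha h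
    rcases hKs ha with h' | h'
    · exact h'
    · exact absurd h h'.1
  · intro u hu
    exact adom_Kstar A (adom_mono hKs hu)

lemma datRound {k : ℕ} {A : Set Atom} (hA : Shape M k A) :
    ∃ C, ChX X (DatRules (RM M)) A = C ∧ A ⊆ C ∧ Shape M k C ∧
      ChX X (DatRules (RM M)) C = C := by
  by_cases hex : ∃ D : Deriv (DatRules (RM M)) A, D.IsX X ∧ D.Fair X
  · obtain ⟨-, hFair⟩ := hex.choose_spec
    have hch : ChX X (DatRules (RM M)) A = hex.choose.res := by rw [ChX, dif_pos hex]
    have hsand : ∀ n, hex.choose.inst n ⊆ Kstar A := by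
      intro n
      induction n with
      | zero => exact subset_Kstar A
      | succ n ih =>
        show instSeq A hex.choose.steps (n+1) ⊆ _
        rw [instSeq_succ]
        cases hs : hex.choose.steps n with
        | none => simpa [Deriv.inst] using ih
        | some t =>
          obtain ⟨hrule, hon, -⟩ := hex.choose.valid n t hs
          intro x hx
          rcases hx with hx | hx
          · exact ih hx
          · exact Kstar_closed t hrule (hon.mono_right ih) hx
    have hressand : hex.choose.res ⊆ Kstar A := Set.iUnion_subset hsand
    have hShapeInst : ∀ n, Shape M k (hex.choose.inst n) := fun n =>
      shape_from_Kstar hA (subset_instSeq A hex.choose.steps n) (hsand n)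
    have hShapeRes : Shape M k hex.choose.res :=
      shape_from_Kstar hA (subset_res hex.choose) hressand
    have hclosed : ClosedUnder (DatRules (RM M)) hex.choose.res := by
      intro t hrule hon
      by_contra hns
      have hbody : ((t.rule.1.image (applyA t.sub)) : Set Atom) ⊆ hex.choose.res := by
        intro x hx
        obtain ⟨b, hb, rfl⟩ := Finset.mem_image.1 (Finset.mem_coe.1 hx)
        exact hon b (Finset.mem_coe.2 hb)
      obtain ⟨n, hn⟩ := finite_subset_inst hbody
      have hon_n : t.isOn (hex.choose.inst n) := fun b hb =>
        hn (Finset.mem_coe.2 (Finset.mem_image_of_mem _ (Finset.mem_coe.1 hb)))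
      have happ : Applicable X t (hex.choose.inst n) := by
        by_contra hna
        exact hns ((out_subset_of_not_applicable hrule hon_n (hShapeInst n) hna).trans
          (inst_subset_res hex.choose n))
      obtain ⟨m, hm, hnam⟩ := hFair n t hrule hon_n happ
      have hon_m : t.isOn (hex.choose.inst m) :=
        hon_n.mono_right (instSeq_mono A hex.choose.steps (le_of_lt hm))
      exact hns ((out_subset_of_not_applicable hrule hon_m (hShapeInst m) hnam).trans
        (inst_subset_res hex.choose m))
    exact ⟨hex.choose.res, hch, subset_res hex.choose, hShapeRes, ChX_of_closed hclosed⟩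
  · have hch : ChX X (DatRules (RM M)) A = A := by rw [ChX, dif_neg hex]
    exact ⟨A, hch, subset_rfl, hA, hch⟩

end DatRound

section Main

variable {M : TCM} {X : ChaseVariant}

lemma ndatRound {k : ℕ} {J : Set Atom} (hJ : Shape M k J)
    (hOut : ∀ j < k, (exOut M (XP M j) : Set Atom) ⊆ J) :
    ChX X (NDatRules (RM M)) J = J ∨
      ChX X (NDatRules (RM M)) J = J ∪ (exOut M (XP M k) : Set Atom) := by
  by_cases hex : ∃ D : Deriv (NDatRules (RM M)) J, D.IsX X ∧ D.Fair X
  · have hch : ChX X (NDatRules (RM M)) J = hex.choose.res := by rw [ChX, dif_pos hex]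
    have hstep : ∀ n t, hex.choose.inst n ⊆ J ∪ (exOut M (XP M k) : Set Atom) →
        hex.choose.steps n = some t → t.out = exOut M (XP M k) := by
      intro n t hsub hs
      obtain ⟨hrule, hon, hout⟩ := hex.choose.valid n t hs
      have hre : t.rule = ruleEx M := mem_NDat.1 hrule
      have hon : IsHomOn t.sub ((ruleEx M).1 : Set Atom) (instSeq J hex.choose.steps n) := by
        rw [← hre]; exact hon
      have hEndatom : ((pEnd, [t.sub (Sum.inl 2)]) : Atom) ∈ hex.choose.inst n := by
        have := hon (pEnd, [vt 2]) (by simp [ruleEx])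
        simpa [applyA, applyT, vt, Deriv.inst] using this
      have h2 : t.sub (Sum.inl 2) = wC := by
        rcases hsub hEndatom with hmem | hmem
        · have := hJ.hEnd _ hmem rfl
          simpa using this
        · exact absurd rfl (exOut_no_End (Finset.mem_coe.1 hmem))
      have hGatom : ((pG, [t.sub (Sum.inl 1), wC]) : Atom) ∈ hex.choose.inst n := by
        have := hon (pG, [vt 1, vt 2]) (by simp [ruleEx])
        simpa [applyA, applyT, vt, h2, Deriv.inst] using this
      have hGJ : ((pG, [t.sub (Sum.inl 1), wC]) : Atom) ∈ J := by
        rcases hsub hGatom with hmem | hmem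
        · exact hmem
        · exact absurd rfl (exOut_no_G (Finset.mem_coe.1 hmem))
      obtain ⟨j, hjk, hy⟩ := hJ.hadom (t.sub (Sum.inl 1)) ⟨_, hGJ, by simp⟩
      have houteq : t.out = exOut M (XP M j) := by rw [out_ruleEx hre h2, hy]
      have hjeq : j = k := by
        by_contra hne
        have hjk' : j < k := by omega
        apply hout
        rw [houteq]
        exact (hOut j hjk').trans (subset_instSeq J hex.choose.steps n)
      rw [houteq, hjeq]
    have hsub : ∀ n, hex.choose.inst n ⊆ J ∪ (exOut M (XP M k) : Set Atom) := by
      intro n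
      induction n with
      | zero => exact Set.subset_union_left
      | succ n ih =>
        show instSeq J hex.choose.steps (n+1) ⊆ _
        rw [instSeq_succ]
        cases hs : hex.choose.steps n with
        | none => simpa [Deriv.inst] using ih
        | some t =>
          have ho := hstep n t ih hs
          intro x hx
          rcases hx with hx | hx
          · exact ih hx
          · change x ∈ (t.out : Set Atom) at hx
            rw [ho] at hx
            exact Or.inr hx
    have hres : hex.choose.res ⊆ J ∪ (exOut M (XP M k) : Set Atom) := Set.iUnion_subset hsub
    by_cases hfired : ∃ n t, hex.choose.steps n = some t
    · right
      obtain ⟨n, t, hs⟩ := hfired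
      rw [hch]
      apply Set.Subset.antisymm hres
      apply Set.union_subset (subset_res hex.choose)
      have ho := hstep n t (hsub n) hs
      have : (exOut M (XP M k) : Set Atom) ⊆ hex.choose.inst (n+1) := by
        rw [← ho]
        show _ ⊆ instSeq J hex.choose.steps (n+1)
        rw [instSeq_succ, hs]
        exact Set.subset_union_right
      exact this.trans (inst_subset_res hex.choose (n+1))
    · left
      push_neg at hfired
      have hinst : ∀ n, instSeq J hex.choose.steps n = J := by
        intro n
        induction n with
        | zero => rfl
        | succ n ih =>
          have hnone : hex.choose.steps n = none := by
            cases h : hex.choose.steps n with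
            | none => rfl
            | some t => exact absurd h (hfired n t)
          rw [instSeq_succ, hnone, ih]
          simp
      rw [hch]
      ext x
      simp only [Deriv.res, Deriv.inst, Set.mem_iUnion]
      constructor
      · rintro ⟨n, hn⟩; rw [hinst n] at hn; exact hn
      · intro hx; exact ⟨0, hx⟩
  · left; rw [ChX, dif_neg hex]

/-- The full invariant carried along the outer induction. -/
def InvK (M : TCM) (X : ChaseVariant) (k : ℕ) (J : Set Atom) : Prop :=
  Shape M k J ∧ (∀ j < k, (exOut M (XP M j) : Set Atom) ⊆ J) ∧
    ChX X (DatRules (RM M)) J = J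

lemma good_succ {k : ℕ} {J : Set Atom} (h : InvK M X k J) :
    ChX X (DatRules (RM M)) (ChX X (NDatRules (RM M)) J) = J ∨
      InvK M X (k+1) (ChX X (DatRules (RM M)) (ChX X (NDatRules (RM M)) J)) := by
  obtain ⟨hSh, hO, hidem⟩ := h
  rcases ndatRound (X := X) hSh hO with hA | hA
  · left; rw [hA, hidem]
  · right
    have hShapeA : Shape M (k+1) (J ∪ (exOut M (XP M k) : Set Atom)) := by
      constructor
      · intro a ha hp
        rcases ha with ha | ha
        · exact hSh.hEnd a ha hp
        · exact absurd hp (exOut_no_End (Finset.mem_coe.1 ha))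
      · exact Or.inl hSh.hEndMem
      · intro a ha hp
        rcases ha with ha | ha
        · obtain ⟨j, hj, he⟩ := hSh.hS0 a ha hp
          exact ⟨j, by omega, he⟩
        · refine ⟨k, by omega, ?_⟩
          have := exOut_S0 (Finset.mem_coe.1 ha) hp
          rw [this]; rfl
      · intro j hj
        rcases Nat.lt_or_ge j k with hjk | hjk
        · exact Or.inl (hSh.hS0Mem j hjk)
        · have hjk' : j = k := by omega
          subst hjk'
          right
          exact Finset.mem_coe.2 (mem_exOut.2 (Or.inl rfl))
      · intro u hu
        rw [adom_union] at hu
        rcases hu with hu | hu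
        · obtain ⟨j, hj, he⟩ := hSh.hadom u hu
          exact ⟨j, by omega, he⟩
        · rcases adom_exOut hu with rfl | rfl
          · exact ⟨k+1, le_refl _, rfl⟩
          · exact ⟨k, by omega, rfl⟩
    obtain ⟨C, hC, hAC, hShC, hCidem⟩ := datRound (X := X) hShapeA
    rw [hA, hC]
    refine ⟨hShC, ?_, hCidem⟩
    intro j hj
    rcases Nat.lt_or_ge j k with hjk | hjk
    · exact ((hO j hjk).trans Set.subset_union_left).trans hAC
    · have hjk' : j = k := by omega
      subst hjk'
      exact Set.subset_union_right.trans hAC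

lemma shape_IE : Shape M 0 IE := by
  constructor
  · intro a ha _
    exact ha
  · rfl
  · intro a ha hp
    rw [show a = ((pEnd, [wC]) : Atom) from ha] at hp
    exact absurd hp (by show pEnd ≠ pS0; simp only [pEnd, pS0]; omega)
  · intro j hj; omega
  · intro u hu
    obtain ⟨a, ha, hua⟩ := hu
    rw [show a = ((pEnd, [wC]) : Atom) from ha] at hua
    simp only [List.mem_cons, List.not_mem_nil, or_false] at hua
    exact ⟨0, le_refl _, hua⟩

lemma good_all : ∀ k : ℕ, InvK M X k (StepX X M k IE) ∨
    ∃ j < k, StepX X M (j+1) IE = StepX X M j IE := by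
  intro k
  induction k with
  | zero =>
    left
    obtain ⟨C, hC, hAC, hShC, hCidem⟩ := datRound (X := X) (shape_IE (M := M))
    show InvK M X 0 (ChX X (DatRules (RM M)) IE)
    rw [hC]
    exact ⟨hShC, fun j hj => by omega, hCidem⟩
  | succ k ih =>
    rcases ih with hInv | ⟨j, hj, hst⟩
    · rcases good_succ (X := X) hInv with hstable | hInv'
      · right
        exact ⟨k, by omega, by
          show ChX X (DatRules (RM M)) (ChX X (NDatRules (RM M)) (StepX X M k IE)) = _
          exact hstable⟩
      · left
        show InvK M X (k+1) (ChX X (DatRules (RM M)) (ChX X (NDatRules (RM M)) (StepX X M k IE)))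
        exact hInv'
    · right; exact ⟨j, by omega, hst⟩

lemma stable_prop {j : ℕ} (hst : StepX X M (j+1) IE = StepX X M j IE) :
    ∀ i, j ≤ i → StepX X M i IE = StepX X M j IE := by
  intro i
  induction i with
  | zero => intro h; rw [Nat.le_zero.1 h]
  | succ i ih =>
    intro h
    rcases Nat.lt_or_ge j (i+1) with hlt | hge
    · have hji : j ≤ i := by omega
      have : StepX X M (i+1) IE = StepX X M (j+1) IE := by
        show ChX X (DatRules (RM M)) (ChX X (NDatRules (RM M)) (StepX X M i IE)) = _
        rw [ih hji]
        rfl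
      rw [this, hst]
    · have : j = i + 1 := by omega
      rw [this]

end Main

/-- the chase from `{End(w)}` is a chain. -/
theorem stmt_2 (M : TCM) (X : ChaseVariant) (n : ℕ) (hn : 0 < n)
    (hne : StepX X M n IE ≠ StepX X M (n - 1) IE) :
    ∃ ts : ℕ → FTerm, ts n = wC ∧
      (∀ i ≤ n, ∀ j ≤ n, ts i = ts j → i = j) ∧
      adom (StepX X M n IE) = {u | ∃ i ≤ n, u = ts i} ∧
      {a ∈ StepX X M n IE | a.1 = pS0} =
        {a : Atom | ∃ i < n, a = (pS0, [ts i, ts (i + 1)])} := by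
  have hGood : InvK M X n (StepX X M n IE) := by
    rcases good_all (M := M) (X := X) n with h | ⟨j, hj, hst⟩
    · exact h
    · exfalso
      apply hne
      have h1 := stable_prop (X := X) hst n (by omega)
      have h2 := stable_prop (X := X) hst (n-1) (by omega)
      rw [h1, h2]
  obtain ⟨hSh, -, -⟩ := hGood
  refine ⟨fun i => XP M (n - i), ?_, ?_, ?_, ?_⟩
  · show XP M (n - n) = wC
    rw [Nat.sub_self]
    rfl
  · intro i hi j hj h
    have := XP_inj (M := M) h
    omega
  · ext u
    constructor
    · intro hu
      obtain ⟨j, hj, rfl⟩ := hSh.hadom u hu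
      exact ⟨n - j, by omega, congrArg (XP M) (by omega)⟩
    · rintro ⟨i, hi, rfl⟩
      show XP M (n - i) ∈ adom (StepX X M n IE)
      rcases Nat.eq_zero_or_pos (n - i) with h0 | hpos
      · rw [h0]
        exact ⟨(pEnd, [wC]), hSh.hEndMem, by simp [XP, wC, ct]⟩
      · obtain ⟨j, hj⟩ : ∃ j, n - i = j + 1 := ⟨n - i - 1, by omega⟩
        rw [hj]
        exact ⟨edgeA M j, hSh.hS0Mem j (by omega), by simp [edgeA]⟩
  · ext a
    simp only [Set.mem_sep_iff, Set.mem_setOf_eq]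
    constructor
    · rintro ⟨haJ, hp⟩
      obtain ⟨j, hj, rfl⟩ := hSh.hS0 a haJ hp
      refine ⟨n - 1 - j, by omega, ?_⟩
      show edgeA M j = (pS0, [XP M (n - (n - 1 - j)), XP M (n - ((n - 1 - j) + 1))])
      have e1 : n - (n - 1 - j) = j + 1 := by omega
      have e2 : n - ((n - 1 - j) + 1) = j := by omega
      rw [e1, e2]
      rfl
    · rintro ⟨i, hi, rfl⟩
      refine ⟨?_, rfl⟩
      show ((pS0, [XP M (n - i), XP M (n - (i + 1))]) : Atom) ∈ StepX X M n IE
      have e1 : n - i = (n - i - 1) + 1 := by omega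
      have e2 : n - (i + 1) = n - i - 1 := by omega
      rw [e1, e2]
      exact hSh.hS0Mem (n - i - 1) (by omega)

end
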